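/- Let p ≤ n be positive integers, let G ∈ ℍ^{n×n} and M ∈ ℍ^{n×n} be Hermitian positive definite, and let X ∈ ℍ^{n×p} satisfy XᴴGX = I_p. Then a matrix Y ∈ ℍ^{n×p} satisfies re(tr(ξᴴMY)) = 0 for every ξ ∈ ℍ^{n×p} with ξᴴGX + XᴴGξ = 0 if and only if there exists a Hermitian matrix S ∈ ℍ^{p×p} with MY = GXS. -/

import Mathlib

open Matrix
open scoped Quaternion

lemma re_sum {ι : Type*} (s : Finset ι) (f : ι → ℍ[ℝ]) :
    (∑ i ∈ s, f i).re = ∑ i ∈ s, (f i).re :=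
  map_sum (QuaternionAlgebra.reₗ (-1 : ℝ) 0 (-1)) f s

lemma retr_mul_comm {m n : ℕ} (A : Matrix (Fin m) (Fin n) ℍ[ℝ]) (B : Matrix (Fin n) (Fin m) ℍ[ℝ]) :
    ((A*B).trace).re = ((B*A).trace).re := by
  simp only [Matrix.trace, Matrix.diag, Matrix.mul_apply, re_sum]
  rw [Finset.sum_comm]
  congr 1; ext j; congr 1; ext i
  simp [Quaternion.re_mul]; ring

lemma retr_conjT {m : ℕ} (A : Matrix (Fin m) (Fin m) ℍ[ℝ]) :
    ((Aᴴ).trace).re = (A.trace).re := by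
  simp only [Matrix.trace, Matrix.diag, Matrix.conjTranspose_apply, re_sum]
  simp

lemma retr_self {m n : ℕ} (A : Matrix (Fin m) (Fin n) ℍ[ℝ])
    (h : ((Aᴴ*A).trace).re = 0) : A = 0 := by
  have key : ∀ j i, Quaternion.normSq (A i j) = 0 := by
    have h2 : (∑ j, ∑ i, Quaternion.normSq (A i j)) = 0 := by
      rw [← h]
      simp only [Matrix.trace, Matrix.diag, Matrix.mul_apply, Matrix.conjTranspose_apply, re_sum]
      congr 1; ext j; congr 1; ext i
      rw [Quaternion.star_mul_self]; simp
    intro j i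
    have := (Finset.sum_eq_zero_iff_of_nonneg (fun j _ => Finset.sum_nonneg
      (fun i _ => Quaternion.normSq_nonneg))).mp h2 j (Finset.mem_univ j)
    exact (Finset.sum_eq_zero_iff_of_nonneg
      (fun i _ => Quaternion.normSq_nonneg)).mp this i (Finset.mem_univ i)
  exact Matrix.ext fun i j => Quaternion.normSq_eq_zero.mp (key j i)

/-- Characterization of the normal space of the generalized quaternionic Stiefel
manifold at `X` with respect to the metric `⟨ξ,η⟩ = re(tr(ξᴴMη))`:
`Y` is orthogonal to every tangent vector iff `MY = GXS` for some Hermitian `S`. -/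
theorem normalSpace_generalized_quaternionic_stiefel (n p : ℕ) (hp : 0 < p) (hpn : p ≤ n)
    (G M : Matrix (Fin n) (Fin n) ℍ[ℝ]) (hG : Gᴴ = G) (hM : Mᴴ = M)
    (hGpd : ∀ x : Fin n → ℍ[ℝ], x ≠ 0 → 0 < (star x ⬝ᵥ G *ᵥ x).re)
    (hMpd : ∀ x : Fin n → ℍ[ℝ], x ≠ 0 → 0 < (star x ⬝ᵥ M *ᵥ x).re)
    (X : Matrix (Fin n) (Fin p) ℍ[ℝ]) (hX : Xᴴ * G * X = 1)
    (Y : Matrix (Fin n) (Fin p) ℍ[ℝ]) :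
    (∀ ξ : Matrix (Fin n) (Fin p) ℍ[ℝ], ξᴴ * G * X + Xᴴ * G * ξ = 0 →
        ((ξᴴ * (M * Y)).trace).re = 0) ↔
      ∃ S : Matrix (Fin p) (Fin p) ℍ[ℝ], Sᴴ = S ∧ M * Y = G * X * S := by
  constructor
  · intro h
    set S : Matrix (Fin p) (Fin p) ℍ[ℝ] := Xᴴ * (M * Y) with hS
    -- Step 1: MY = G X S
    have hW : M * Y = G * X * S := by
      set W : Matrix (Fin n) (Fin p) ℍ[ℝ] := M * Y - G * X * S with hWdef
      have hZ : ∀ Z : Matrix (Fin n) (Fin p) ℍ[ℝ], ((Zᴴ * W).trace).re = 0 := by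
        intro Z
        set ξ : Matrix (Fin n) (Fin p) ℍ[ℝ] := Z - X * (Xᴴ * G * Z) with hξ
        have htan : ξᴴ * G * X + Xᴴ * G * ξ = 0 := by
          have h1 : Xᴴ * G * ξ = 0 := by
            rw [hξ]
            simp only [Matrix.mul_sub, ← Matrix.mul_assoc, hX, Matrix.one_mul, sub_self]
          have h2 : ξᴴ * G * X = (Xᴴ * G * ξ)ᴴ := by
            simp [conjTranspose_mul, hG, Matrix.mul_assoc]
          rw [h1, h2, h1]; simp
        have h0 := h ξ htan
        have hexp : ξᴴ * (M * Y) = Zᴴ * W := by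
          rw [hξ, hWdef, hS]
          simp only [conjTranspose_sub, conjTranspose_mul, conjTranspose_conjTranspose, hG,
            Matrix.sub_mul, Matrix.mul_sub, Matrix.mul_assoc]
        rwa [hexp] at h0
      have h6 := retr_self W (hZ W)
      rw [hWdef] at h6
      exact sub_eq_zero.mp h6
    -- Step 2: S is Hermitian
    have hK : Sᴴ = S := by
      set K : Matrix (Fin p) (Fin p) ℍ[ℝ] := S - Sᴴ with hKdef
      have hKH : Kᴴ = -K := by
        rw [hKdef, conjTranspose_sub, conjTranspose_conjTranspose, neg_sub]
      have htan : (X*K)ᴴ * G * X + Xᴴ * G * (X*K) = 0 := by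
        have e : (X*K)ᴴ * G * X = Kᴴ * (Xᴴ * G * X) := by
          simp only [conjTranspose_mul, Matrix.mul_assoc]
        have e' : Xᴴ * G * (X*K) = (Xᴴ * G * X) * K := by
          simp only [Matrix.mul_assoc]
        rw [e, e', hX, mul_one, one_mul, hKH, neg_add_cancel]
      have h3 := h (X*K) htan
      have e2 : (X*K)ᴴ * (M*Y) = Kᴴ * S := by
        rw [hS]; simp only [conjTranspose_mul, Matrix.mul_assoc]
      rw [e2] at h3
      have h4 : ((Kᴴ*Sᴴ).trace).re = 0 := by
        have e3 : Kᴴ*Sᴴ = (S*K)ᴴ := (conjTranspose_mul S K).symm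
        rw [e3, retr_conjT, retr_mul_comm]
        have e4 : K * S = -(Kᴴ * S) := by
          rw [hKH]; simp [Matrix.neg_mul]
        rw [e4, Matrix.trace_neg]; simp [h3]
      have h5 : ((Kᴴ*K).trace).re = 0 := by
        have e5 : Kᴴ*K = Kᴴ*S - Kᴴ*Sᴴ := by rw [← Matrix.mul_sub, ← hKdef]
        rw [e5, Matrix.trace_sub]; simp [h3, h4]
      have hK0 : K = 0 := retr_self K h5
      have : S - Sᴴ = 0 := hKdef ▸ hK0
      exact (sub_eq_zero.mp this).symm
    exact ⟨S, hK, hW⟩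
  · rintro ⟨S, hSh, hMY⟩ ξ hξ
    rw [hMY]
    set A : Matrix (Fin p) (Fin p) ℍ[ℝ] := ξᴴ * G * X with hA
    have h2 : (ξᴴ * G * X)ᴴ = Xᴴ * G * ξ := by
      simp [conjTranspose_mul, hG, Matrix.mul_assoc]
    have hAskew : Aᴴ = -A := by
      rw [hA, h2]
      exact eq_neg_of_add_eq_zero_right hξ
    have e1 : ξᴴ * (G * X * S) = A * S := by
      simp only [hA, Matrix.mul_assoc]
    rw [e1]
    have e2 : ((A*S).trace).re = -((A*S).trace).re := by
      calc ((A*S).trace).re = (((A*S)ᴴ).trace).re := (retr_conjT _).symm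
        _ = ((Sᴴ * Aᴴ).trace).re := by rw [conjTranspose_mul]
        _ = ((S * (-A)).trace).re := by rw [hSh, hAskew]
        _ = -((S * A).trace).re := by rw [Matrix.mul_neg, Matrix.trace_neg]; simp
        _ = -((A*S).trace).re := by rw [retr_mul_comm]
    linarith
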